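/- Let A ∈ ℝ^{m×m}, B₀ ∈ ℝ^{m×d}, and let 0 ≤ k ≤ m−1 be such that the m×(d(k+1)) block matrix [B₀, AB₀, …, AᵏB₀] has rank m (Kalman condition). Then there exist constants c₁, c₂ > 0, depending only on A, B₀ and k, such that for every T > 0 and every t ∈ (0,T], with φ(s) := s(T−s)/T², one has ⟨(∫₀ᵗ φ(s) e^{(T−s)A} B₀B₀* e^{(T−s)A*} ds) a, a⟩ ≥ (c₁ (min(t,1))^{2(k+1)} / (T e^{c₂ T})) |a|² for all a ∈ ℝᵐ. -/

import Mathlib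

set_option synthInstance.maxHeartbeats 1000000
set_option maxHeartbeats 2000000

open scoped RealInnerProductSpace

lemma coercive_of_pos {V : Type*} [NormedAddCommGroup V] [NormedSpace ℝ V]
    [FiniteDimensional ℝ V] (q : V → ℝ) (hq : Continuous q)
    (hpos : ∀ x : V, x ≠ 0 → 0 < q x)
    (hhom : ∀ (c : ℝ) (x : V), 0 ≤ c → q (c • x) = c ^ 2 * q x) :
    ∃ δ > (0:ℝ), ∀ x : V, δ * ‖x‖ ^ 2 ≤ q x := by
  have hq0 : q 0 = 0 := by
    have := hhom 0 0 le_rfl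
    simpa using this
  rcases subsingleton_or_nontrivial V with hV | hV
  · exact ⟨1, one_pos, fun x => by
      rw [Subsingleton.elim x (0:V)]; simp [hq0]⟩
  · have hsph : (Metric.sphere (0:V) 1).Nonempty := by
      obtain ⟨x, hx⟩ := exists_norm_eq V (zero_le_one (α := ℝ))
      exact ⟨x, by simpa [Metric.mem_sphere, dist_zero_right] using hx⟩
    obtain ⟨x₀, hx₀, hmin⟩ := (isCompact_sphere (0:V) 1).exists_isMinOn hsph hq.continuousOn
    have hx₀norm : ‖x₀‖ = 1 := by simpa [Metric.mem_sphere, dist_zero_right] using hx₀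
    have hδ : 0 < q x₀ := hpos x₀ (by intro h; rw [h] at hx₀norm; simp at hx₀norm)
    refine ⟨q x₀, hδ, fun x => ?_⟩
    rcases eq_or_ne x 0 with rfl | hx
    · simp [hq0]
    · have hxn : (0:ℝ) < ‖x‖ := norm_pos_iff.mpr hx
      set u := ‖x‖⁻¹ • x with hu
      have hun : ‖u‖ = 1 := by
        rw [hu, norm_smul, norm_inv, norm_norm, inv_mul_cancel₀ hxn.ne']
      have hmem : u ∈ Metric.sphere (0:V) 1 := by
        simpa [Metric.mem_sphere, dist_zero_right] using hun
      have h1 : q x₀ ≤ q u := hmin hmem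
      have h2 : q x = ‖x‖ ^ 2 * q u := by
        have : q (‖x‖ • u) = ‖x‖ ^ 2 * q u := hhom _ _ (norm_nonneg x)
        rwa [hu, smul_smul, mul_inv_cancel₀ hxn.ne', one_smul] at this
      rw [h2, mul_comm (q x₀)]
      exact mul_le_mul_of_nonneg_left h1 (by positivity)

section PolySec
variable {F : Type*} [NormedAddCommGroup F] [InnerProductSpace ℝ F] [FiniteDimensional ℝ F]

-- continuity of evaluation in coefficients and in u
lemma eval_continuous2 (k : ℕ) :
    Continuous (fun pu : (Fin (k+1) → F) × ℝ => ∑ j : Fin (k+1), pu.2 ^ (j:ℕ) • pu.1 j) := by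
  refine continuous_finset_sum _ fun j _ => ?_
  exact ((continuous_snd.pow _).smul ((continuous_apply j).comp continuous_fst))

lemma poly_eval_zero_coeffs (k : ℕ) (p : Fin (k+1) → F)
    (h : ∀ u ∈ Set.Ioo (0:ℝ) 1, ∑ j : Fin (k+1), u ^ (j:ℕ) • p j = 0) : p = 0 := by
  -- reduce to scalar polynomials via inner products
  funext j₀
  by_contra hj
  have hne : p j₀ ≠ 0 := hj
  set v := p j₀ with hv
  -- scalar polynomial
  set P : Polynomial ℝ := ∑ j : Fin (k+1), Polynomial.C ⟪p j, v⟫ * Polynomial.X ^ (j:ℕ) with hP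
  have hroots : ∀ u ∈ Set.Ioo (0:ℝ) 1, P.IsRoot u := by
    intro u hu
    have := h u hu
    have h2 : ⟪∑ j : Fin (k+1), u ^ (j:ℕ) • p j, v⟫ = 0 := by rw [this]; simp
    rw [sum_inner] at h2
    simp only [inner_smul_left, RCLike.conj_to_real] at h2
    simp only [Polynomial.IsRoot, hP, Polynomial.eval_finset_sum]
    rw [← h2]; congr 1; funext j; simp [Polynomial.eval_mul, Polynomial.eval_pow]; ring
  have hPzero : P = 0 := by
    refine Polynomial.eq_zero_of_infinite_isRoot P ?_
    refine Set.Infinite.mono ?_ (Set.Ioo_infinite (by norm_num : (0:ℝ) < 1))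
    intro u hu
    exact hroots u hu
  -- extract coefficient j₀
  have hcoeff : P.coeff (j₀:ℕ) = ⟪p j₀, v⟫ := by
    rw [hP, Polynomial.finset_sum_coeff]
    rw [Finset.sum_eq_single j₀]
    · simp
    · intro b _ hb
      simp only [Polynomial.coeff_C_mul, Polynomial.coeff_X_pow]
      rw [if_neg (by simpa [Fin.val_eq_val, eq_comm] using hb), mul_zero]
    · simp
  rw [hPzero] at hcoeff
  simp only [Polynomial.coeff_zero] at hcoeff
  exact hne (inner_self_eq_zero.mp hcoeff.symm)

lemma poly_int_lower (k : ℕ) :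
    ∃ c₀ > (0:ℝ), ∀ p : Fin (k+1) → F,
      c₀ * (∑ j : Fin (k+1), ‖p j‖ ^ 2) ≤
        ∫ u in (0:ℝ)..1, ‖∑ j : Fin (k+1), u ^ (j:ℕ) • p j‖ ^ 2 := by
  set q : (Fin (k+1) → F) → ℝ :=
    fun p => ∫ u in (0:ℝ)..1, ‖∑ j : Fin (k+1), u ^ (j:ℕ) • p j‖ ^ 2 with hqdef
  have hcont_eval : ∀ p : Fin (k+1) → F,
      Continuous (fun u : ℝ => ∑ j : Fin (k+1), u ^ (j:ℕ) • p j) := by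
    intro p
    exact (eval_continuous2 k).comp (Continuous.prodMk continuous_const continuous_id)
  have hint : ∀ p : Fin (k+1) → F,
      IntervalIntegrable (fun u : ℝ => ‖∑ j : Fin (k+1), u ^ (j:ℕ) • p j‖ ^ 2)
        MeasureTheory.volume 0 1 := by
    intro p
    exact (((hcont_eval p).norm.pow 2)).intervalIntegrable _ _
  -- q as finite sum formula
  have hformula : ∀ p : Fin (k+1) → F,
      q p = ∑ i : Fin (k+1), ∑ j : Fin (k+1),
        (1 / ((i:ℕ) + (j:ℕ) + 1 : ℝ)) * ⟪p i, p j⟫ := by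
    intro p
    rw [hqdef]
    have h1 : ∀ u : ℝ, ‖∑ j : Fin (k+1), u ^ (j:ℕ) • p j‖ ^ 2
        = ∑ i : Fin (k+1), ∑ j : Fin (k+1), u ^ ((i:ℕ) + (j:ℕ)) * ⟪p i, p j⟫ := by
      intro u
      rw [← real_inner_self_eq_norm_sq, sum_inner]
      congr 1
      funext i
      rw [inner_sum]
      congr 1
      funext j
      rw [real_inner_smul_left, real_inner_smul_right, pow_add]
      ring
    simp only [h1]
    rw [intervalIntegral.integral_finset_sum]
    · congr 1
      funext i
      rw [intervalIntegral.integral_finset_sum]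
      · congr 1
        funext j
        rw [intervalIntegral.integral_mul_const, integral_pow]
        norm_num
      · intro j _
        exact ((continuous_pow _).mul continuous_const).intervalIntegrable _ _
    · intro i _
      refine (Continuous.intervalIntegrable ?_ _ _)
      exact continuous_finset_sum _ fun j _ => (continuous_pow _).mul continuous_const
  have hqcont : Continuous q := by
    have : Continuous (fun p : Fin (k+1) → F => ∑ i : Fin (k+1), ∑ j : Fin (k+1),
        (1 / ((i:ℕ) + (j:ℕ) + 1 : ℝ)) * ⟪p i, p j⟫) := by
      refine continuous_finset_sum _ fun i _ => continuous_finset_sum _ fun j _ => ?_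
      exact continuous_const.mul (((continuous_apply i)).inner (continuous_apply j))
    convert this using 1
    funext p
    exact hformula p
  have hpos : ∀ p : Fin (k+1) → F, p ≠ 0 → 0 < q p := by
    intro p hp
    set g : ℝ → ℝ := fun u => ‖∑ j : Fin (k+1), u ^ (j:ℕ) • p j‖ ^ 2 with hg
    have hgc : Continuous g := ((hcont_eval p).norm.pow 2)
    have hgnn : ∀ u, 0 ≤ g u := fun u => by positivity
    -- there is u₀ ∈ Ioo 0 1 with g u₀ > 0
    have hex : ∃ u₀ ∈ Set.Ioo (0:ℝ) 1, 0 < g u₀ := by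
      by_contra hcon
      push_neg at hcon
      have : ∀ u ∈ Set.Ioo (0:ℝ) 1, ∑ j : Fin (k+1), u ^ (j:ℕ) • p j = 0 := by
        intro u hu
        have h0 : g u = 0 := le_antisymm (hcon u hu) (hgnn u)
        have := h0
        rw [hg] at this
        rw [pow_eq_zero_iff (by norm_num), norm_eq_zero] at this
        exact this
      exact hp (poly_eval_zero_coeffs k p this)
    obtain ⟨u₀, hu₀, hgu₀⟩ := hex
    rw [hqdef]
    rw [intervalIntegral.integral_pos_iff_support_of_nonneg_ae
      (Filter.Eventually.of_forall hgnn) (hint p)]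
    refine ⟨by norm_num, ?_⟩
    have hopen : IsOpen (g ⁻¹' Set.Ioi 0 ∩ Set.Ioo 0 1) :=
      (hgc.isOpen_preimage _ isOpen_Ioi).inter isOpen_Ioo
    have hne : (g ⁻¹' Set.Ioi 0 ∩ Set.Ioo 0 1).Nonempty := ⟨u₀, hgu₀, hu₀⟩
    have hsub : g ⁻¹' Set.Ioi 0 ∩ Set.Ioo 0 1 ⊆ Function.support g ∩ Set.Ioc 0 1 := by
      rintro u ⟨h1, h2⟩
      exact ⟨ne_of_gt h1, Set.Ioo_subset_Ioc_self h2⟩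
    calc (0:ENNReal) < MeasureTheory.volume (g ⁻¹' Set.Ioi 0 ∩ Set.Ioo 0 1) :=
          hopen.measure_pos _ hne
      _ ≤ MeasureTheory.volume (Function.support g ∩ Set.Ioc 0 1) :=
          MeasureTheory.measure_mono hsub
  have hhom : ∀ (c : ℝ) (p : Fin (k+1) → F), 0 ≤ c → q (c • p) = c ^ 2 * q p := by
    intro c p _
    rw [hqdef]
    simp only [Pi.smul_apply, smul_comm _ c]
    have h1 : ∀ u : ℝ, ‖∑ j : Fin (k+1), c • (u ^ (j:ℕ) • p j)‖ ^ 2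
        = c ^ 2 * ‖∑ j : Fin (k+1), u ^ (j:ℕ) • p j‖ ^ 2 := by
      intro u
      rw [← Finset.smul_sum, norm_smul]
      rw [mul_pow]
      congr 1
      simp [sq_abs]
    simp only [h1]
    rw [intervalIntegral.integral_const_mul]
  obtain ⟨δ, hδ, hbound⟩ := coercive_of_pos q hqcont hpos hhom
  refine ⟨δ / (k+1), by positivity, fun p => ?_⟩
  have h1 : ∑ j : Fin (k+1), ‖p j‖ ^ 2 ≤ (k+1) * ‖p‖ ^ 2 := by
    have : ∀ j : Fin (k+1), ‖p j‖ ^ 2 ≤ ‖p‖ ^ 2 := by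
      intro j
      exact pow_le_pow_left₀ (norm_nonneg _) (norm_le_pi_norm p j) 2
    calc ∑ j : Fin (k+1), ‖p j‖ ^ 2 ≤ ∑ _j : Fin (k+1), ‖p‖ ^ 2 :=
          Finset.sum_le_sum fun j _ => this j
      _ = (k+1) * ‖p‖ ^ 2 := by simp [Finset.sum_const, mul_comm]
  calc δ / (k+1) * ∑ j : Fin (k+1), ‖p j‖ ^ 2 ≤ δ / (k+1) * ((k+1) * ‖p‖ ^ 2) := by
        apply mul_le_mul_of_nonneg_left h1 (by positivity)
    _ = δ * ‖p‖ ^ 2 := by field_simp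
    _ ≤ q p := hbound p

end PolySec

lemma kalman_coercive (m d k : ℕ)
    (A : EuclideanSpace ℝ (Fin m) →L[ℝ] EuclideanSpace ℝ (Fin m))
    (B₀ : EuclideanSpace ℝ (Fin d) →L[ℝ] EuclideanSpace ℝ (Fin m))
    (hKalman : (⨆ j ∈ Finset.range (k + 1),
        LinearMap.range ((A ^ j).comp B₀ :
          EuclideanSpace ℝ (Fin d) →ₗ[ℝ] EuclideanSpace ℝ (Fin m))) = (⊤ : Submodule ℝ (EuclideanSpace ℝ (Fin m)))) :
    ∃ δ > (0:ℝ), ∀ x : EuclideanSpace ℝ (Fin m),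
      δ * ‖x‖ ^ 2 ≤ ∑ j ∈ Finset.range (k+1), ‖B₀.adjoint ((A.adjoint ^ j) x)‖ ^ 2 := by
  set q : EuclideanSpace ℝ (Fin m) → ℝ :=
    fun x => ∑ j ∈ Finset.range (k+1), ‖B₀.adjoint ((A.adjoint ^ j) x)‖ ^ 2 with hq
  have hcont : Continuous q := by
    refine continuous_finset_sum _ fun j _ => ?_
    exact ((B₀.adjoint.continuous.comp (A.adjoint ^ j).continuous).norm.pow 2)
  have hpos : ∀ x, x ≠ 0 → 0 < q x := by
    intro x hx
    rcases lt_or_eq_of_le (show (0:ℝ) ≤ q x from Finset.sum_nonneg fun j _ => by positivity)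
      with h | h
    · exact h
    exfalso
    -- all terms vanish
    have hzero : ∀ j ∈ Finset.range (k+1), B₀.adjoint ((A.adjoint ^ j) x) = 0 := by
      intro j hj
      have := (Finset.sum_eq_zero_iff_of_nonneg (fun j _ => by positivity)).mp h.symm j hj
      rwa [pow_eq_zero_iff (two_ne_zero), norm_eq_zero] at this
    -- x is orthogonal to everything
    have hsup : (⨆ j ∈ Finset.range (k + 1), LinearMap.range ((A ^ j).comp B₀ :
          EuclideanSpace ℝ (Fin d) →ₗ[ℝ] EuclideanSpace ℝ (Fin m))) ≤
        LinearMap.ker (innerSL ℝ x : EuclideanSpace ℝ (Fin m) →ₗ[ℝ] ℝ) := by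
      refine iSup₂_le fun j hj => ?_
      rintro y ⟨z, rfl⟩
      simp only [LinearMap.mem_ker, ContinuousLinearMap.coe_coe, innerSL_apply_apply]
      have h1 : ⟪B₀.adjoint ((A ^ j).adjoint x), z⟫ = ⟪x, ((A ^ j).comp B₀) z⟫ := by
        rw [ContinuousLinearMap.adjoint_inner_left, ContinuousLinearMap.adjoint_inner_left,
          ContinuousLinearMap.comp_apply]
      have h2 : (A ^ j).adjoint = A.adjoint ^ j := by
        rw [← ContinuousLinearMap.star_eq_adjoint, ← ContinuousLinearMap.star_eq_adjoint,
          star_pow]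
      rw [← h1, h2, hzero j hj, inner_zero_left]
    rw [hKalman] at hsup
    have : ⟪x, x⟫ = 0 := by
      have := hsup (Submodule.mem_top : x ∈ ⊤)
      simpa using this
    exact hx (inner_self_eq_zero.mp this)
  have hhom : ∀ (c : ℝ) (x : EuclideanSpace ℝ (Fin m)), 0 ≤ c → q (c • x) = c ^ 2 * q x := by
    intro c x _
    rw [hq]
    simp only [map_smul, norm_smul, mul_pow, Real.norm_eq_abs, sq_abs]
    rw [← Finset.mul_sum]
  exact coercive_of_pos q hcont hpos hhom

-- Taylor remainder for exp
lemma exp_taylor_bound {E : Type*} [NormedAddCommGroup E] [NormedSpace ℝ E] [CompleteSpace E]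
    (L : E →L[ℝ] E) (k : ℕ) (x : E) (u : ℝ) (hu : 0 ≤ u) (hu1 : u ≤ 1) :
    ‖NormedSpace.exp (u • L) x - ∑ j ∈ Finset.range (k+1), (u ^ j / (j.factorial : ℝ)) • (L ^ j) x‖
      ≤ u ^ (k+1) * Real.exp ‖L‖ * ‖x‖ := by
  -- the series applied to x
  have hsum : HasSum (fun n => (u ^ n / (n.factorial : ℝ)) • (L ^ n) x)
      (NormedSpace.exp (u • L) x) := by
    have h0 : HasSum (fun n => ((n.factorial : ℝ)⁻¹) • (u • L) ^ n)
        (NormedSpace.exp (u • L)) := NormedSpace.exp_series_hasSum_exp' (u • L)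
    have h1 := (ContinuousLinearMap.apply ℝ E x).hasSum h0
    convert h1 using 2 with n
    rw [ContinuousLinearMap.apply_apply, smul_pow, ContinuousLinearMap.smul_apply,
      ContinuousLinearMap.smul_apply, smul_smul]
    congr 1
    rw [div_eq_mul_inv, mul_comm]
    rfl
  have hsummable := hsum.summable
  -- tail expression
  have htail : NormedSpace.exp (u • L) x
      - ∑ j ∈ Finset.range (k+1), (u ^ j / (j.factorial : ℝ)) • (L ^ j) x
      = ∑' n : ℕ, (u ^ (n + (k+1)) / ((n + (k+1)).factorial : ℝ)) • (L ^ (n + (k+1))) x := by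
    have hsplit := Summable.sum_add_tsum_nat_add (f := fun n => (u ^ n / (n.factorial : ℝ)) • (L ^ n) x)
      (k+1) hsummable
    rw [← hsum.tsum_eq, ← hsplit, add_sub_cancel_left]
  rw [htail]
  have hbound : ∀ n : ℕ,
      ‖(u ^ (n + (k+1)) / ((n + (k+1)).factorial : ℝ)) • (L ^ (n + (k+1))) x‖
        ≤ u ^ (k+1) * (‖L‖ ^ (n + (k+1)) / ((n + (k+1)).factorial : ℝ)) * ‖x‖ := by
    intro n
    rw [norm_smul]
    have h1 : ‖(L ^ (n + (k+1))) x‖ ≤ ‖L‖ ^ (n + (k+1)) * ‖x‖ := by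
      calc ‖(L ^ (n + (k+1))) x‖ ≤ ‖L ^ (n + (k+1))‖ * ‖x‖ := (L ^ _).le_opNorm x
        _ ≤ ‖L‖ ^ (n + (k+1)) * ‖x‖ := by
            exact mul_le_mul_of_nonneg_right (norm_pow_le' _ (Nat.succ_le_of_lt (by positivity))
              |>.trans_eq rfl) (norm_nonneg x)
    have h2 : ‖u ^ (n + (k+1)) / ((n + (k+1)).factorial : ℝ)‖
        ≤ u ^ (k+1) / ((n + (k+1)).factorial : ℝ) := by
      rw [Real.norm_eq_abs, abs_div, abs_of_nonneg (pow_nonneg hu _),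
        Nat.abs_cast]
      apply div_le_div_of_nonneg_right ?_ (by positivity)
      calc u ^ (n + (k+1)) = u ^ n * u ^ (k+1) := by rw [← pow_add]
          _ ≤ 1 * u ^ (k+1) := by
              apply mul_le_mul_of_nonneg_right (pow_le_one₀ hu hu1) (pow_nonneg hu _)
          _ = u ^ (k+1) := one_mul _
    calc ‖u ^ (n + (k+1)) / ((n + (k+1)).factorial : ℝ)‖ * ‖(L ^ (n + (k+1))) x‖
        ≤ (u ^ (k+1) / ((n + (k+1)).factorial : ℝ)) * (‖L‖ ^ (n + (k+1)) * ‖x‖) := by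
          apply mul_le_mul h2 h1 (norm_nonneg _) (by positivity)
      _ = u ^ (k+1) * (‖L‖ ^ (n + (k+1)) / ((n + (k+1)).factorial : ℝ)) * ‖x‖ := by ring
  have hmaj : Summable (fun n : ℕ =>
      u ^ (k+1) * (‖L‖ ^ (n + (k+1)) / ((n + (k+1)).factorial : ℝ)) * ‖x‖) := by
    apply Summable.mul_right
    apply Summable.mul_left
    exact ((Real.summable_pow_div_factorial ‖L‖).comp_injective (add_left_injective (k+1)))
  calc ‖∑' n : ℕ, (u ^ (n + (k+1)) / ((n + (k+1)).factorial : ℝ)) • (L ^ (n + (k+1))) x‖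
      ≤ ∑' n : ℕ, ‖(u ^ (n + (k+1)) / ((n + (k+1)).factorial : ℝ)) • (L ^ (n + (k+1))) x‖ := by
        apply norm_tsum_le_tsum_norm
        apply Summable.of_nonneg_of_le (fun n => norm_nonneg _) hbound hmaj
    _ ≤ ∑' n : ℕ, u ^ (k+1) * (‖L‖ ^ (n + (k+1)) / ((n + (k+1)).factorial : ℝ)) * ‖x‖ := by
        apply Summable.tsum_le_tsum hbound _ hmaj
        apply Summable.of_nonneg_of_le (fun n => norm_nonneg _) hbound hmaj
    _ = u ^ (k+1) * (∑' n : ℕ, ‖L‖ ^ (n + (k+1)) / ((n + (k+1)).factorial : ℝ)) * ‖x‖ := by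
        rw [tsum_mul_right, tsum_mul_left]
    _ ≤ u ^ (k+1) * Real.exp ‖L‖ * ‖x‖ := by
        apply mul_le_mul_of_nonneg_right _ (norm_nonneg x)
        apply mul_le_mul_of_nonneg_left _ (pow_nonneg hu _)
        have hfull : ∑' n : ℕ, ‖L‖ ^ n / (n.factorial : ℝ) = Real.exp ‖L‖ := by
          rw [Real.exp_eq_exp_ℝ, NormedSpace.exp_eq_tsum_div]
        have := Summable.sum_add_tsum_nat_add (f := fun n : ℕ => ‖L‖ ^ n / (n.factorial : ℝ)) (k+1)
          (Real.summable_pow_div_factorial ‖L‖)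
        rw [← hfull, ← this]
        have hnn : 0 ≤ ∑ i ∈ Finset.range (k+1), ‖L‖ ^ i / (i.factorial : ℝ) :=
          Finset.sum_nonneg fun i _ => by positivity
        linarith

section CoreSec
variable {E : Type*} [NormedAddCommGroup E] [InnerProductSpace ℝ E] [FiniteDimensional ℝ E]
variable {F : Type*} [NormedAddCommGroup F] [InnerProductSpace ℝ F] [FiniteDimensional ℝ F]

lemma exp_apply_continuous (As : E →L[ℝ] E) (x : E) :
    Continuous (fun u : ℝ => NormedSpace.exp (u • As) x) := by
  have h1 : Continuous (fun u : ℝ => NormedSpace.exp (u • As)) := by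
    let +nondep : NormedAlgebra ℚ (E →L[ℝ] E) := .restrictScalars ℚ ℝ _
    exact NormedSpace.exp_continuous.comp (continuous_id.smul continuous_const)
  exact (ContinuousLinearMap.apply ℝ E x).continuous.comp h1

lemma core_lemma (k : ℕ) (As : E →L[ℝ] E) (Bs : E →L[ℝ] F)
    (δ : ℝ) (hδ : 0 < δ)
    (hcoer : ∀ x : E, δ * ‖x‖ ^ 2 ≤ ∑ j ∈ Finset.range (k+1), ‖Bs ((As ^ j) x)‖ ^ 2) :
    ∃ c > (0:ℝ), ∃ r₀ : ℝ, 0 < r₀ ∧ r₀ ≤ 1 ∧ ∀ r, 0 < r → r ≤ r₀ → ∀ x : E,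
      c * r ^ (2*k+1) * ‖x‖ ^ 2 ≤
        ∫ u in (0:ℝ)..r, ‖Bs (NormedSpace.exp (u • As) x)‖ ^ 2 := by
  obtain ⟨c₀, hc₀, hpoly⟩ := poly_int_lower (F := F) k
  set C : ℝ := ‖Bs‖ * Real.exp ‖As‖ + 1 with hC
  have hCpos : 0 < C := by positivity
  set δ' : ℝ := ((k.factorial : ℝ)⁻¹) ^ 2 * δ with hδ'
  have hδ'pos : 0 < δ' := by positivity
  refine ⟨c₀ * δ' / 4, by positivity,
    min 1 (Real.sqrt (c₀ * δ' / (4 * C ^ 2))), ?_, min_le_left _ _, ?_⟩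
  · exact lt_min one_pos (Real.sqrt_pos.mpr (by positivity))
  intro r hr hrle x
  have hr1 : r ≤ 1 := hrle.trans (min_le_left _ _)
  have hrsq : C ^ 2 * r ^ 2 ≤ c₀ * δ' / 4 := by
    have h1 : r ≤ Real.sqrt (c₀ * δ' / (4 * C ^ 2)) := hrle.trans (min_le_right _ _)
    have h2 : r ^ 2 ≤ c₀ * δ' / (4 * C ^ 2) := by
      rw [← Real.sq_sqrt (by positivity : (0:ℝ) ≤ c₀ * δ' / (4 * C ^ 2))]
      exact pow_le_pow_left₀ hr.le h1 2
    calc C ^ 2 * r ^ 2 ≤ C ^ 2 * (c₀ * δ' / (4 * C ^ 2)) := by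
          exact mul_le_mul_of_nonneg_left h2 (by positivity)
      _ = c₀ * δ' / 4 := by field_simp
  -- coefficients
  obtain ⟨p, hp⟩ : ∃ p : Fin (k+1) → F,
      p = fun j : Fin (k+1) => (((j:ℕ).factorial : ℝ)⁻¹) • Bs ((As ^ (j:ℕ)) x) := ⟨_, rfl⟩
  obtain ⟨P, hP⟩ : ∃ P : ℝ → F, P = fun u => ∑ j : Fin (k+1), u ^ (j:ℕ) • p j := ⟨_, rfl⟩
  obtain ⟨f, hf⟩ : ∃ f : ℝ → F, f = fun u => Bs (NormedSpace.exp (u • As) x) := ⟨_, rfl⟩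
  have hgoal : (∫ u in (0:ℝ)..r, ‖Bs (NormedSpace.exp (u • As) x)‖ ^ 2)
      = ∫ u in (0:ℝ)..r, ‖f u‖ ^ 2 := by rw [hf]
  rw [hgoal]
  have hPeq : ∀ u : ℝ, P u = Bs (∑ j ∈ Finset.range (k+1),
      (u ^ j / (j.factorial : ℝ)) • ((As ^ j) x)) := by
    intro u
    have h1 : Bs (∑ j ∈ Finset.range (k+1), (u ^ j / (j.factorial : ℝ)) • ((As ^ j) x))
        = ∑ j ∈ Finset.range (k+1), u ^ j • (((j.factorial : ℝ))⁻¹ • Bs ((As ^ j) x)) := by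
      rw [map_sum]
      refine Finset.sum_congr rfl fun j _ => ?_
      rw [map_smul, smul_smul, div_eq_mul_inv]
    rw [h1, hP, hp]
    exact Fin.sum_univ_eq_sum_range
      (fun j => u ^ j • (((j.factorial : ℝ))⁻¹ • Bs ((As ^ j) x))) (k+1)
  have hfc : Continuous f := by
    rw [hf]; exact Bs.continuous.comp (exp_apply_continuous As x)
  have hPc : Continuous P := by
    rw [hP]
    exact continuous_finset_sum _ fun j _ => (continuous_pow _).smul continuous_const
  -- remainder bound
  have hRbound : ∀ u : ℝ, 0 ≤ u → u ≤ 1 → ‖f u - P u‖ ≤ C * u ^ (k+1) * ‖x‖ := by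
    intro u hu hu1
    rw [hf, hPeq u, ← map_sub]
    calc ‖Bs (NormedSpace.exp (u • As) x - ∑ j ∈ Finset.range (k+1),
          (u ^ j / (j.factorial : ℝ)) • ((As ^ j) x))‖
        ≤ ‖Bs‖ * ‖NormedSpace.exp (u • As) x - ∑ j ∈ Finset.range (k+1),
          (u ^ j / (j.factorial : ℝ)) • ((As ^ j) x)‖ := Bs.le_opNorm _
      _ ≤ ‖Bs‖ * (u ^ (k+1) * Real.exp ‖As‖ * ‖x‖) := by
          exact mul_le_mul_of_nonneg_left (exp_taylor_bound As k x u hu hu1) (norm_nonneg _)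
      _ ≤ C * u ^ (k+1) * ‖x‖ := by
          rw [hC]
          have : (0:ℝ) ≤ u ^ (k+1) * ‖x‖ := by positivity
          nlinarith [norm_nonneg Bs, Real.exp_pos ‖As‖]
  -- pointwise lower bound
  have hpw : ∀ u : ℝ, 0 ≤ u → u ≤ 1 →
      (1/2) * ‖P u‖ ^ 2 - C ^ 2 * u ^ (2*(k+1)) * ‖x‖ ^ 2 ≤ ‖f u‖ ^ 2 := by
    intro u hu hu1
    have h1 := hRbound u hu hu1
    have h2 : ‖P u‖ ≤ ‖f u‖ + ‖f u - P u‖ := by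
      calc ‖P u‖ = ‖f u - (f u - P u)‖ := by congr 1; abel
        _ ≤ ‖f u‖ + ‖f u - P u‖ := norm_sub_le _ _
    have h3 : ‖f u - P u‖ ^ 2 ≤ (C * u ^ (k+1) * ‖x‖) ^ 2 :=
      pow_le_pow_left₀ (norm_nonneg _) h1 2
    have h4 : (C * u ^ (k+1) * ‖x‖) ^ 2 = C ^ 2 * u ^ (2*(k+1)) * ‖x‖ ^ 2 := by
      rw [mul_pow, mul_pow, ← pow_mul]
      ring_nf
    have h5 : ‖P u‖ ^ 2 ≤ 2 * ‖f u‖ ^ 2 + 2 * ‖f u - P u‖ ^ 2 := by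
      nlinarith [pow_le_pow_left₀ (norm_nonneg (P u)) h2 2,
        sq_nonneg (‖f u‖ - ‖f u - P u‖)]
    have h6 : ‖f u - P u‖ ^ 2 ≤ C ^ 2 * u ^ (2*(k+1)) * ‖x‖ ^ 2 := h4 ▸ h3
    set R2 := ‖f u - P u‖ ^ 2
    set X := C ^ 2 * u ^ (2*(k+1)) * ‖x‖ ^ 2
    linarith
  -- sum of coefficient norms lower bound
  have hsump : δ' * ‖x‖ ^ 2 ≤ ∑ j : Fin (k+1), ‖p j‖ ^ 2 := by
    have h1 : ∀ j : Fin (k+1), ((k.factorial : ℝ)⁻¹) ^ 2 * ‖Bs ((As ^ (j:ℕ)) x)‖ ^ 2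
        ≤ ‖p j‖ ^ 2 := by
      intro j
      rw [hp]
      simp only [norm_smul, mul_pow, norm_inv, Real.norm_natCast]
      apply mul_le_mul_of_nonneg_right _ (by positivity)
      apply pow_le_pow_left₀ (by positivity)
      have : (k.factorial : ℝ) ≥ ((j:ℕ).factorial : ℝ) := by
        exact_mod_cast Nat.factorial_le (Nat.lt_succ_iff.mp j.isLt)
      apply inv_anti₀ _ this
      exact_mod_cast Nat.factorial_pos _
    calc δ' * ‖x‖ ^ 2 = ((k.factorial : ℝ)⁻¹) ^ 2 * (δ * ‖x‖ ^ 2) := by rw [hδ']; ring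
      _ ≤ ((k.factorial : ℝ)⁻¹) ^ 2 * ∑ j ∈ Finset.range (k+1), ‖Bs ((As ^ j) x)‖ ^ 2 := by
          exact mul_le_mul_of_nonneg_left (hcoer x) (by positivity)
      _ = ∑ j : Fin (k+1), ((k.factorial : ℝ)⁻¹) ^ 2 * ‖Bs ((As ^ (j:ℕ)) x)‖ ^ 2 := by
          rw [Finset.mul_sum]
          exact (Fin.sum_univ_eq_sum_range
            (fun j => ((k.factorial : ℝ)⁻¹) ^ 2 * ‖Bs ((As ^ j) x)‖ ^ 2) (k+1)).symm
      _ ≤ ∑ j : Fin (k+1), ‖p j‖ ^ 2 := Finset.sum_le_sum fun j _ => h1 j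
  -- lower bound on ∫ ‖P‖²
  have hPint : c₀ * δ' * r ^ (2*k+1) * ‖x‖ ^ 2 ≤ ∫ u in (0:ℝ)..r, ‖P u‖ ^ 2 := by
    have hcov : ∫ u in (0:ℝ)..r, ‖P u‖ ^ 2 = r * ∫ v in (0:ℝ)..1, ‖P (r * v)‖ ^ 2 := by
      rw [intervalIntegral.integral_comp_mul_left (fun u => ‖P u‖ ^ 2) hr.ne']
      rw [mul_zero, mul_one, smul_eq_mul, ← mul_assoc, mul_inv_cancel₀ hr.ne', one_mul]
    have hPrv : ∀ v : ℝ, P (r * v) = ∑ j : Fin (k+1), v ^ (j:ℕ) • ((r ^ (j:ℕ)) • p j) := by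
      intro v
      rw [hP]
      refine Finset.sum_congr rfl fun j _ => ?_
      rw [mul_pow, smul_smul]
      congr 1
      ring
    have h2 : c₀ * ∑ j : Fin (k+1), ‖(r ^ (j:ℕ)) • p j‖ ^ 2
        ≤ ∫ v in (0:ℝ)..1, ‖P (r * v)‖ ^ 2 := by
      have := hpoly (fun j => (r ^ (j:ℕ)) • p j)
      calc c₀ * ∑ j : Fin (k+1), ‖(r ^ (j:ℕ)) • p j‖ ^ 2
          ≤ ∫ v in (0:ℝ)..1, ‖∑ j : Fin (k+1), v ^ (j:ℕ) • ((r ^ (j:ℕ)) • p j)‖ ^ 2 := this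
        _ = ∫ v in (0:ℝ)..1, ‖P (r * v)‖ ^ 2 := by
            refine intervalIntegral.integral_congr fun v _ => ?_
            rw [hPrv v]
    have h3 : r ^ (2*k) * ∑ j : Fin (k+1), ‖p j‖ ^ 2
        ≤ ∑ j : Fin (k+1), ‖(r ^ (j:ℕ)) • p j‖ ^ 2 := by
      rw [Finset.mul_sum]
      refine Finset.sum_le_sum fun j _ => ?_
      have h5 : ‖(r ^ (j:ℕ)) • p j‖ = r ^ (j:ℕ) * ‖p j‖ := by
        conv_lhs => rw [norm_smul]
        rw [Real.norm_eq_abs, abs_of_nonneg (by positivity)]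
      rw [h5, mul_pow, ← pow_mul]
      exact mul_le_mul_of_nonneg_right
        (pow_le_pow_of_le_one hr.le hr1 (by omega)) (by positivity)
    calc c₀ * δ' * r ^ (2*k+1) * ‖x‖ ^ 2
        = r * (c₀ * (r ^ (2*k) * (δ' * ‖x‖ ^ 2))) := by rw [pow_succ]; ring
      _ ≤ r * (c₀ * (r ^ (2*k) * ∑ j : Fin (k+1), ‖p j‖ ^ 2)) := by
          apply mul_le_mul_of_nonneg_left _ hr.le
          apply mul_le_mul_of_nonneg_left _ hc₀.le
          exact mul_le_mul_of_nonneg_left hsump (by positivity)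
      _ ≤ r * (c₀ * ∑ j : Fin (k+1), ‖(r ^ (j:ℕ)) • p j‖ ^ 2) := by
          apply mul_le_mul_of_nonneg_left _ hr.le
          exact mul_le_mul_of_nonneg_left h3 hc₀.le
      _ ≤ r * ∫ v in (0:ℝ)..1, ‖P (r * v)‖ ^ 2 := mul_le_mul_of_nonneg_left h2 hr.le
      _ = ∫ u in (0:ℝ)..r, ‖P u‖ ^ 2 := hcov.symm
  -- assemble
  have hint1 : IntervalIntegrable (fun u => ‖f u‖ ^ 2) MeasureTheory.volume 0 r :=
    ((hfc.norm.pow 2)).intervalIntegrable _ _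
  have hint2 : IntervalIntegrable
      (fun u => (1/2) * ‖P u‖ ^ 2 - C ^ 2 * u ^ (2*(k+1)) * ‖x‖ ^ 2)
      MeasureTheory.volume 0 r := by
    apply IntervalIntegrable.sub
    · exact (continuous_const.mul (hPc.norm.pow 2)).intervalIntegrable _ _
    · exact ((continuous_const.mul (continuous_pow _)).mul
        continuous_const).intervalIntegrable _ _
  have hmono : ∫ u in (0:ℝ)..r,
        ((1/2) * ‖P u‖ ^ 2 - C ^ 2 * u ^ (2*(k+1)) * ‖x‖ ^ 2)
      ≤ ∫ u in (0:ℝ)..r, ‖f u‖ ^ 2 := by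
    apply intervalIntegral.integral_mono_on hr.le hint2 hint1
    intro u hu
    exact hpw u hu.1 (hu.2.trans hr1)
  have hsplit : ∫ u in (0:ℝ)..r,
        ((1/2) * ‖P u‖ ^ 2 - C ^ 2 * u ^ (2*(k+1)) * ‖x‖ ^ 2)
      = (1/2) * (∫ u in (0:ℝ)..r, ‖P u‖ ^ 2)
        - C ^ 2 * ‖x‖ ^ 2 * (r ^ (2*(k+1)+1) / (2*(k+1)+1)) := by
    rw [intervalIntegral.integral_sub]
    · congr 1
      · rw [intervalIntegral.integral_const_mul]
      · have : ∀ u : ℝ, C ^ 2 * u ^ (2*(k+1)) * ‖x‖ ^ 2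
            = (C ^ 2 * ‖x‖ ^ 2) * u ^ (2*(k+1)) := by intro u; ring
        simp only [this]
        rw [intervalIntegral.integral_const_mul, integral_pow]
        norm_num
    · exact (continuous_const.mul (hPc.norm.pow 2)).intervalIntegrable _ _
    · exact ((continuous_const.mul (continuous_pow _)).mul
        continuous_const).intervalIntegrable _ _
  have herr : C ^ 2 * ‖x‖ ^ 2 * (r ^ (2*(k+1)+1) / (2*(k+1)+1))
      ≤ (c₀ * δ' / 4) * r ^ (2*k+1) * ‖x‖ ^ 2 := by
    have h1 : r ^ (2*(k+1)+1) = r ^ 2 * r ^ (2*k+1) := by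
      rw [← pow_add]
      congr 1
      omega
    have h2 : r ^ (2*(k+1)+1) / (2*(k+1)+1 : ℝ) ≤ r ^ (2*(k+1)+1) := by
      apply div_le_self (by positivity)
      have hk0 : (0:ℝ) ≤ (k:ℝ) := Nat.cast_nonneg k
      linarith
    calc C ^ 2 * ‖x‖ ^ 2 * (r ^ (2*(k+1)+1) / (2*(k+1)+1))
        ≤ C ^ 2 * ‖x‖ ^ 2 * r ^ (2*(k+1)+1) :=
          mul_le_mul_of_nonneg_left h2 (by positivity)
      _ = (C ^ 2 * r ^ 2) * r ^ (2*k+1) * ‖x‖ ^ 2 := by rw [h1]; ring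
      _ ≤ (c₀ * δ' / 4) * r ^ (2*k+1) * ‖x‖ ^ 2 := by
          apply mul_le_mul_of_nonneg_right _ (by positivity)
          exact mul_le_mul_of_nonneg_right hrsq (by positivity)
  calc (c₀ * δ' / 4) * r ^ (2*k+1) * ‖x‖ ^ 2
      = (1/2) * (c₀ * δ' * r ^ (2*k+1) * ‖x‖ ^ 2)
        - (c₀ * δ' / 4) * r ^ (2*k+1) * ‖x‖ ^ 2 := by ring
    _ ≤ (1/2) * (∫ u in (0:ℝ)..r, ‖P u‖ ^ 2)
        - C ^ 2 * ‖x‖ ^ 2 * (r ^ (2*(k+1)+1) / (2*(k+1)+1)) := by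
        apply sub_le_sub
        · exact mul_le_mul_of_nonneg_left hPint (by norm_num)
        · exact herr
    _ = ∫ u in (0:ℝ)..r,
        ((1/2) * ‖P u‖ ^ 2 - C ^ 2 * u ^ (2*(k+1)) * ‖x‖ ^ 2) := hsplit.symm
    _ ≤ ∫ u in (0:ℝ)..r, ‖f u‖ ^ 2 := hmono

end CoreSec

lemma exp_apply_norm_le {E : Type*} [NormedAddCommGroup E] [NormedSpace ℝ E] [CompleteSpace E]
    (L : E →L[ℝ] E) (y : E) : ‖NormedSpace.exp L y‖ ≤ Real.exp ‖L‖ * ‖y‖ := by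
  have hsum : HasSum (fun n => ((n.factorial : ℝ)⁻¹) • (L ^ n) y)
      (NormedSpace.exp L y) :=
    (ContinuousLinearMap.apply ℝ E y).hasSum (NormedSpace.exp_series_hasSum_exp' (𝕂 := ℝ) L)
  have hbound : ∀ n : ℕ, ‖((n.factorial : ℝ)⁻¹) • (L ^ n) y‖
      ≤ (‖L‖ ^ n / (n.factorial : ℝ)) * ‖y‖ := by
    intro n
    rw [norm_smul, norm_inv, Real.norm_natCast]
    calc (n.factorial : ℝ)⁻¹ * ‖(L ^ n) y‖
        ≤ (n.factorial : ℝ)⁻¹ * (‖L‖ ^ n * ‖y‖) := by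
          apply mul_le_mul_of_nonneg_left _ (by positivity)
          calc ‖(L ^ n) y‖ ≤ ‖L ^ n‖ * ‖y‖ := (L ^ n).le_opNorm y
            _ ≤ ‖L‖ ^ n * ‖y‖ := by
                rcases Nat.eq_zero_or_pos n with rfl | hn
                · simp only [pow_zero, one_mul]
                  have h0 : ‖(1 : E →L[ℝ] E)‖ ≤ 1 := by
                    rw [ContinuousLinearMap.one_def]
                    exact ContinuousLinearMap.norm_id_le
                  exact mul_le_mul_of_nonneg_right h0 (norm_nonneg y) |>.trans_eq (one_mul _)
                · exact mul_le_mul_of_nonneg_right (norm_pow_le' _ hn) (norm_nonneg y)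
      _ = (‖L‖ ^ n / (n.factorial : ℝ)) * ‖y‖ := by ring
  have hmaj : Summable (fun n : ℕ => (‖L‖ ^ n / (n.factorial : ℝ)) * ‖y‖) :=
    (Real.summable_pow_div_factorial ‖L‖).mul_right _
  calc ‖NormedSpace.exp L y‖ = ‖∑' n : ℕ, ((n.factorial : ℝ)⁻¹) • (L ^ n) y‖ := by
        rw [hsum.tsum_eq]
    _ ≤ ∑' n : ℕ, ‖((n.factorial : ℝ)⁻¹) • (L ^ n) y‖ := by
        apply norm_tsum_le_tsum_norm
        exact Summable.of_nonneg_of_le (fun n => norm_nonneg _) hbound hmaj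
    _ ≤ ∑' n : ℕ, (‖L‖ ^ n / (n.factorial : ℝ)) * ‖y‖ := by
        apply Summable.tsum_le_tsum hbound _ hmaj
        exact Summable.of_nonneg_of_le (fun n => norm_nonneg _) hbound hmaj
    _ = Real.exp ‖L‖ * ‖y‖ := by
        rw [tsum_mul_right]
        congr 1
        rw [Real.exp_eq_exp_ℝ, NormedSpace.exp_eq_tsum_div]

/-- Theorem 4.2(1) of the paper.
Under the Kalman rank condition `Rank[B₀, AB₀, …, AᵏB₀] = m` with `0 ≤ k ≤ m−1`, there
are constants `c₁, c₂ > 0` depending only on `A`, `B₀`, `k` such that for all `T > 0`,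
`t ∈ (0,T]`, with `φ(s) = s(T−s)/T²`,
`∫₀ᵗ φ(s) e^{(T−s)A}B₀B₀*e^{(T−s)A*} ds ≥ (c₁ (t∧1)^{2(k+1)}/(T e^{c₂T})) I`. -/
theorem stmt8 (m d k : ℕ) (hm : 1 ≤ m) (hk : k ≤ m - 1)
    (A : EuclideanSpace ℝ (Fin m) →L[ℝ] EuclideanSpace ℝ (Fin m))
    (B₀ : EuclideanSpace ℝ (Fin d) →L[ℝ] EuclideanSpace ℝ (Fin m))
    (hKalman : (⨆ j ∈ Finset.range (k + 1),
        LinearMap.range ((A ^ j).comp B₀ :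
          EuclideanSpace ℝ (Fin d) →ₗ[ℝ] EuclideanSpace ℝ (Fin m))) = (⊤ : Submodule ℝ (EuclideanSpace ℝ (Fin m)))) :
    ∃ c₁ > (0:ℝ), ∃ c₂ > (0:ℝ), ∀ T : ℝ, 0 < T → ∀ t ∈ Set.Ioc (0:ℝ) T,
      ∀ a : EuclideanSpace ℝ (Fin m),
        (c₁ * min t 1 ^ (2 * (k + 1)) / (T * Real.exp (c₂ * T))) * ‖a‖ ^ 2 ≤
          ⟪(∫ s in (0:ℝ)..t, (s * (T - s) / T ^ 2) •
              (((NormedSpace.exp ((T - s) • A)).comp B₀).comp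
                (B₀.adjoint.comp (NormedSpace.exp ((T - s) • A)).adjoint))) a, a⟫ := by
  obtain ⟨δ, hδ, hcoer⟩ := kalman_coercive m d k A B₀ hKalman
  obtain ⟨c, hc, r₀, hr₀, hr₀1, hcore⟩ := core_lemma k A.adjoint B₀.adjoint δ hδ hcoer
  set ρ : ℝ := min r₀ 2⁻¹ with hρ
  have hρpos : 0 < ρ := lt_min hr₀ (by norm_num)
  have hρle : ρ ≤ 2⁻¹ := min_le_right _ _
  have hρr₀ : ρ ≤ r₀ := min_le_left _ _
  refine ⟨c * ρ ^ (2*(k+1)) / 2 ^ (2*k+3), by positivity,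
    2 * ‖A.adjoint‖ + 1, by positivity, ?_⟩
  intro T hT t ht a
  obtain ⟨ht0, htT⟩ := ht
  set μ : ℝ := min t 1 with hμ
  have hμpos : 0 < μ := lt_min ht0 one_pos
  have hμt : μ ≤ t := min_le_left _ _
  have hμ1 : μ ≤ 1 := min_le_right _ _
  set τ : ℝ := ρ * μ with hτ
  have hτpos : 0 < τ := mul_pos hρpos hμpos
  have hτt2 : τ ≤ t / 2 := by
    calc τ ≤ 2⁻¹ * μ := mul_le_mul_of_nonneg_right hρle hμpos.le
      _ ≤ 2⁻¹ * t := mul_le_mul_of_nonneg_left hμt (by norm_num)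
      _ = t / 2 := by ring
  have hτT2 : τ ≤ T / 2 := hτt2.trans (by linarith)
  have hτr₀ : τ / 2 ≤ r₀ := by
    have h1 : τ ≤ ρ := by
      calc τ = ρ * μ := hτ
        _ ≤ ρ * 1 := mul_le_mul_of_nonneg_left hμ1 hρpos.le
        _ = ρ := mul_one ρ
    linarith
  -- the adjoint of the exponential
  have hadj : ∀ s : ℝ, (NormedSpace.exp ((T - s) • A)).adjoint
      = NormedSpace.exp ((T - s) • A.adjoint) := by
    intro s
    rw [← ContinuousLinearMap.star_eq_adjoint, NormedSpace.star_exp, star_smul, star_trivial,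
      ContinuousLinearMap.star_eq_adjoint]
  -- the operator-valued integrand, made opaque
  obtain ⟨G, hG⟩ : ∃ G : ℝ → (EuclideanSpace ℝ (Fin m) →L[ℝ] EuclideanSpace ℝ (Fin m)),
      G = fun s => (s * (T - s) / T ^ 2) •
        (((NormedSpace.exp ((T - s) • A)).comp B₀).comp
          (B₀.adjoint.comp (NormedSpace.exp ((T - s) • A)).adjoint)) := ⟨_, rfl⟩
  have hGcont : Continuous G := by
    rw [hG]
    have h1 : Continuous (fun s : ℝ => NormedSpace.exp ((T - s) • A)) := by
      let +nondep : NormedAlgebra ℚ (EuclideanSpace ℝ (Fin m) →L[ℝ] EuclideanSpace ℝ (Fin m)) :=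
        .restrictScalars ℚ ℝ _
      exact NormedSpace.exp_continuous.comp ((continuous_const.sub continuous_id).smul continuous_const)
    have h2 : Continuous (fun s : ℝ => (NormedSpace.exp ((T - s) • A)).adjoint) :=
      (ContinuousLinearMap.adjoint : (EuclideanSpace ℝ (Fin m) →L[ℝ] EuclideanSpace ℝ (Fin m))
        ≃ₗᵢ[ℝ] _).continuous.comp h1
    have hφ : Continuous (fun s : ℝ => s * (T - s) / T ^ 2) :=
      (continuous_id.mul (continuous_const.sub continuous_id)).div_const _
    exact hφ.smul ((h1.clm_comp continuous_const).clm_comp (continuous_const.clm_comp h2))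
  have hGint : IntervalIntegrable G MeasureTheory.volume 0 t :=
    hGcont.intervalIntegrable _ _
  -- scalar integrand
  obtain ⟨h, hh⟩ : ∃ h : ℝ → ℝ,
      h = fun u => ‖B₀.adjoint (NormedSpace.exp (u • A.adjoint) a)‖ ^ 2 := ⟨_, rfl⟩
  have hhc : Continuous h := by
    rw [hh]
    exact (B₀.adjoint.continuous.comp (exp_apply_continuous A.adjoint a)).norm.pow 2
  have hhnn : ∀ u, 0 ≤ h u := by intro u; rw [hh]; positivity
  -- the pointwise inner-product formula
  have hpt : ∀ s : ℝ, ⟪G s a, a⟫ = (s * (T - s) / T ^ 2) * h (T - s) := by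
    intro s
    rw [hG]
    simp only [ContinuousLinearMap.smul_apply, ContinuousLinearMap.comp_apply]
    rw [real_inner_smul_left]
    congr 1
    rw [hadj s, hh]
    have e1 : ⟪(NormedSpace.exp ((T - s) • A))
          (B₀ (B₀.adjoint (NormedSpace.exp ((T - s) • A.adjoint) a))), a⟫
        = ⟪NormedSpace.exp ((T - s) • A.adjoint) a,
            B₀ (B₀.adjoint (NormedSpace.exp ((T - s) • A.adjoint) a))⟫ := by
      rw [real_inner_comm, ← hadj s, ContinuousLinearMap.adjoint_inner_left]
    rw [e1, ← ContinuousLinearMap.adjoint_inner_left, real_inner_self_eq_norm_sq]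
  -- reduce the inner product of the integral to a scalar integral
  have hmain : ⟪(∫ s in (0:ℝ)..t, G s) a, a⟫
      = ∫ s in (0:ℝ)..t, (s * (T - s) / T ^ 2) * h (T - s) := by
    rw [ContinuousLinearMap.intervalIntegral_apply hGint a]
    have hGa : IntervalIntegrable (fun s => G s a) MeasureTheory.volume 0 t :=
      ((ContinuousLinearMap.apply ℝ _ a).continuous.comp hGcont).intervalIntegrable _ _
    have hcomm := ContinuousLinearMap.intervalIntegral_comp_comm (innerSL ℝ a) hGa
    calc ⟪∫ s in (0:ℝ)..t, G s a, a⟫ = ⟪a, ∫ s in (0:ℝ)..t, G s a⟫ := real_inner_comm _ _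
      _ = (innerSL ℝ a) (∫ s in (0:ℝ)..t, G s a) := rfl
      _ = ∫ s in (0:ℝ)..t, (innerSL ℝ a) (G s a) := hcomm.symm
      _ = ∫ s in (0:ℝ)..t, (s * (T - s) / T ^ 2) * h (T - s) := by
          refine intervalIntegral.integral_congr fun s _ => ?_
          show ⟪a, G s a⟫ = _
          rw [real_inner_comm, hpt s]
  have hgoal : (∫ s in (0:ℝ)..t, (s * (T - s) / T ^ 2) •
      (((NormedSpace.exp ((T - s) • A)).comp B₀).comp
        (B₀.adjoint.comp (NormedSpace.exp ((T - s) • A)).adjoint)))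
      = ∫ s in (0:ℝ)..t, G s := by rw [hG]
  rw [hgoal, hmain]
  -- scalar integrand Φ
  obtain ⟨Φ, hΦ⟩ : ∃ Φ : ℝ → ℝ, Φ = fun s => (s * (T - s) / T ^ 2) * h (T - s) := ⟨_, rfl⟩
  have hΦc : Continuous Φ := by
    rw [hΦ]
    exact ((continuous_id.mul (continuous_const.sub continuous_id)).div_const _).mul
      (hhc.comp (continuous_const.sub continuous_id))
  have hΦnn : ∀ s, 0 ≤ s → s ≤ t → 0 ≤ Φ s := by
    intro s hs1 hs2
    rw [hΦ]
    have h1 : 0 ≤ s * (T - s) / T ^ 2 := by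
      apply div_nonneg _ (by positivity)
      exact mul_nonneg hs1 (by linarith)
    exact mul_nonneg h1 (hhnn _)
  have hgoal2 : (∫ s in (0:ℝ)..t, (s * (T - s) / T ^ 2) * h (T - s))
      = ∫ s in (0:ℝ)..t, Φ s := by rw [hΦ]
  rw [hgoal2]
  -- step 1 : restrict the integral to [τ/2, τ]
  have hi1 : IntervalIntegrable Φ MeasureTheory.volume 0 (τ/2) := hΦc.intervalIntegrable _ _
  have hi2 : IntervalIntegrable Φ MeasureTheory.volume (τ/2) τ := hΦc.intervalIntegrable _ _
  have hi3 : IntervalIntegrable Φ MeasureTheory.volume τ t := hΦc.intervalIntegrable _ _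
  have hstep1 : (∫ s in (τ/2)..τ, Φ s) ≤ ∫ s in (0:ℝ)..t, Φ s := by
    have hA1 : (∫ s in (0:ℝ)..(τ/2), Φ s) + (∫ s in (τ/2)..τ, Φ s)
        = ∫ s in (0:ℝ)..τ, Φ s :=
      intervalIntegral.integral_add_adjacent_intervals hi1 hi2
    have hA2 : (∫ s in (0:ℝ)..τ, Φ s) + (∫ s in τ..t, Φ s) = ∫ s in (0:ℝ)..t, Φ s :=
      intervalIntegral.integral_add_adjacent_intervals (hi1.trans hi2) hi3
    have hn1 : 0 ≤ ∫ s in (0:ℝ)..(τ/2), Φ s := by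
      apply intervalIntegral.integral_nonneg (by linarith)
      intro u hu
      exact hΦnn u hu.1 (hu.2.trans (by linarith))
    have hn3 : 0 ≤ ∫ s in τ..t, Φ s := by
      apply intervalIntegral.integral_nonneg (by linarith)
      intro u hu
      exact hΦnn u (le_trans hτpos.le hu.1) hu.2
    linarith
  -- step 2 : pointwise bound on [τ/2, τ]
  have hstep2 : (∫ s in (τ/2)..τ, (τ / (4*T)) * h (T - s)) ≤ ∫ s in (τ/2)..τ, Φ s := by
    apply intervalIntegral.integral_mono_on (by linarith)
    · exact (continuous_const.mul
        (hhc.comp (continuous_const.sub continuous_id))).intervalIntegrable _ _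
    · exact hi2
    · intro s hs
      rw [hΦ]
      apply mul_le_mul_of_nonneg_right _ (hhnn _)
      have hs1 : τ/2 ≤ s := hs.1
      have hs2 : s ≤ τ := hs.2
      have hTs : T/2 ≤ T - s := by linarith
      have hnum : τ/2 * (T/2) ≤ s * (T - s) :=
        mul_le_mul hs1 hTs (by linarith) (by linarith)
      rw [div_le_div_iff₀ (by positivity) (by positivity)]
      calc τ * T ^ 2 = (τ/2 * (T/2)) * (4 * T) := by ring
        _ ≤ (s * (T - s)) * (4 * T) := by
            apply mul_le_mul_of_nonneg_right hnum (by positivity)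
  -- step 3 : pull out the constant
  have hstep3 : (∫ s in (τ/2)..τ, (τ / (4*T)) * h (T - s))
      = (τ / (4*T)) * ∫ s in (τ/2)..τ, h (T - s) :=
    intervalIntegral.integral_const_mul _ _
  -- step 4 : change of variables
  have hstep4 : (∫ s in (τ/2)..τ, h (T - s)) = ∫ s in (0:ℝ)..(τ/2), h (s + (T - τ)) := by
    rw [intervalIntegral.integral_comp_sub_left h T,
      intervalIntegral.integral_comp_add_right h (T - τ)]
    congr 1 <;> ring
  -- step 5 : the exponential semigroup property
  set b : EuclideanSpace ℝ (Fin m) := NormedSpace.exp ((T - τ) • A.adjoint) a with hb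
  have hstep5 : ∀ s : ℝ, h (s + (T - τ))
      = ‖B₀.adjoint (NormedSpace.exp (s • A.adjoint) b)‖ ^ 2 := by
    intro s
    simp only [hh, hb]
    have hcomm : Commute (s • A.adjoint) ((T - τ) • A.adjoint) :=
      ((Commute.refl A.adjoint).smul_left s).smul_right (T - τ)
    have e1 : (s + (T - τ)) • A.adjoint = s • A.adjoint + (T - τ) • A.adjoint := add_smul _ _ _
    let +nondep : NormedAlgebra ℚ (EuclideanSpace ℝ (Fin m) →L[ℝ] EuclideanSpace ℝ (Fin m)) :=
      .restrictScalars ℚ ℝ _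
    rw [e1, NormedSpace.exp_add_of_commute hcomm, ContinuousLinearMap.mul_apply]
  have hstep5' : (∫ s in (0:ℝ)..(τ/2), h (s + (T - τ)))
      = ∫ s in (0:ℝ)..(τ/2), ‖B₀.adjoint (NormedSpace.exp (s • A.adjoint) b)‖ ^ 2 :=
    intervalIntegral.integral_congr fun s _ => hstep5 s
  -- step 6 : core estimate
  have hstep6 : c * (τ/2) ^ (2*k+1) * ‖b‖ ^ 2
      ≤ ∫ s in (0:ℝ)..(τ/2), ‖B₀.adjoint (NormedSpace.exp (s • A.adjoint) b)‖ ^ 2 :=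
    hcore (τ/2) (by linarith) hτr₀ b
  -- step 7 : compare ‖a‖ and ‖b‖
  have hone : NormedSpace.exp (-((T - τ) • A.adjoint))
      * NormedSpace.exp ((T - τ) • A.adjoint) = 1 := by
    let +nondep : NormedAlgebra ℚ (EuclideanSpace ℝ (Fin m) →L[ℝ] EuclideanSpace ℝ (Fin m)) :=
      .restrictScalars ℚ ℝ _
    have h1 := NormedSpace.exp_add_of_commute
      (Commute.neg_left (Commute.refl ((T - τ) • A.adjoint)))
    rw [neg_add_cancel, NormedSpace.exp_zero] at h1
    exact h1.symm
  have ha' : a = NormedSpace.exp (-((T - τ) • A.adjoint)) b := by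
    rw [hb, ← ContinuousLinearMap.mul_apply, hone, ContinuousLinearMap.one_apply]
  have hna : ‖a‖ ≤ Real.exp (‖A.adjoint‖ * T) * ‖b‖ := by
    rw [ha']
    calc ‖NormedSpace.exp (-((T - τ) • A.adjoint)) b‖
        ≤ Real.exp ‖-((T - τ) • A.adjoint)‖ * ‖b‖ := exp_apply_norm_le _ _
      _ ≤ Real.exp (‖A.adjoint‖ * T) * ‖b‖ := by
          apply mul_le_mul_of_nonneg_right _ (norm_nonneg b)
          apply Real.exp_le_exp.mpr
          rw [norm_neg, norm_smul (T - τ) A.adjoint, Real.norm_eq_abs, abs_of_nonneg (by linarith)]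
          calc (T - τ) * ‖A.adjoint‖ ≤ T * ‖A.adjoint‖ :=
                mul_le_mul_of_nonneg_right (by linarith) (norm_nonneg _)
            _ = ‖A.adjoint‖ * T := mul_comm _ _
  have hna2 : ‖a‖ ^ 2 ≤ Real.exp (2 * ‖A.adjoint‖ * T) * ‖b‖ ^ 2 := by
    have h1 := pow_le_pow_left₀ (norm_nonneg a) hna 2
    calc ‖a‖ ^ 2 ≤ (Real.exp (‖A.adjoint‖ * T) * ‖b‖) ^ 2 := h1
      _ = (Real.exp (‖A.adjoint‖ * T)) ^ 2 * ‖b‖ ^ 2 := by rw [mul_pow]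
      _ = Real.exp (2 * ‖A.adjoint‖ * T) * ‖b‖ ^ 2 := by
          congr 1
          rw [← Real.exp_nat_mul]
          congr 1
          push_cast
          ring
  have hXY : Real.exp (2 * ‖A.adjoint‖ * T) ≤ Real.exp ((2 * ‖A.adjoint‖ + 1) * T) := by
    apply Real.exp_le_exp.mpr
    nlinarith [norm_nonneg A.adjoint]
  -- final numeric assembly
  have hfin1 : ‖a‖ ^ 2 ≤ Real.exp ((2 * ‖A.adjoint‖ + 1) * T) * ‖b‖ ^ 2 :=
    hna2.trans (mul_le_mul_of_nonneg_right hXY (by positivity))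
  have e2k : 2*(k+1) = 2*k+2 := by omega
  have hiden : (c * ρ ^ (2*(k+1)) / 2 ^ (2*k+3) * μ ^ (2*(k+1)) / T)
      = (τ / (4*T)) * (c * (τ/2) ^ (2*k+1)) := by
    rw [hτ, e2k]
    rw [div_pow, mul_pow]
    field_simp
    ring
  calc c * ρ ^ (2*(k+1)) / 2 ^ (2*k+3) * μ ^ (2*(k+1))
        / (T * Real.exp ((2 * ‖A.adjoint‖ + 1) * T)) * ‖a‖ ^ 2
      ≤ (c * ρ ^ (2*(k+1)) / 2 ^ (2*k+3) * μ ^ (2*(k+1)) / T) * ‖b‖ ^ 2 := by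
        rw [div_mul_eq_div_div]
        rw [div_mul_eq_mul_div, div_le_iff₀ (Real.exp_pos _)]
        calc c * ρ ^ (2*(k+1)) / 2 ^ (2*k+3) * μ ^ (2*(k+1)) / T * ‖a‖ ^ 2
            ≤ c * ρ ^ (2*(k+1)) / 2 ^ (2*k+3) * μ ^ (2*(k+1)) / T
              * (Real.exp ((2 * ‖A.adjoint‖ + 1) * T) * ‖b‖ ^ 2) := by
              apply mul_le_mul_of_nonneg_left hfin1 (by positivity)
          _ = c * ρ ^ (2*(k+1)) / 2 ^ (2*k+3) * μ ^ (2*(k+1)) / T * ‖b‖ ^ 2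
              * Real.exp ((2 * ‖A.adjoint‖ + 1) * T) := by ring
    _ = (τ / (4*T)) * (c * (τ/2) ^ (2*k+1) * ‖b‖ ^ 2) := by
        rw [← mul_assoc ((τ / (4*T))) _ _, ← hiden]
    _ ≤ (τ / (4*T)) * ∫ s in (0:ℝ)..(τ/2),
          ‖B₀.adjoint (NormedSpace.exp (s • A.adjoint) b)‖ ^ 2 := by
        exact mul_le_mul_of_nonneg_left hstep6 (by positivity)
    _ = (τ / (4*T)) * ∫ s in (0:ℝ)..(τ/2), h (s + (T - τ)) := by rw [hstep5']
    _ = (τ / (4*T)) * ∫ s in (τ/2)..τ, h (T - s) := by rw [hstep4]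
    _ = ∫ s in (τ/2)..τ, (τ / (4*T)) * h (T - s) := hstep3.symm
    _ ≤ ∫ s in (τ/2)..τ, Φ s := hstep2
    _ ≤ ∫ s in (0:ℝ)..t, Φ s := hstep1
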